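/- Let m ≥ 0. The linear map K^{m+1} → K^{m+2} given by the matrix Z^{m+1}_{m+2} is injective, and its image equals the hyperplane { s ∈ K^{m+2} : s_1 = Σ_{i=2}^{m+2} ε_i s_i }, where ε_i = +1 if i ≡ 2 or 3 (mod 4) and ε_i = −1 if i ≡ 0 or 1 (mod 4). In particular this image is an (m+1)-dimensional subspace of K^{m+2}. -/

import Mathlib

/-- The matrix `Z^{m+1}_{m+2}` (the `m`-th enlargement of the column `[1;1]`),
determined by `(Zr)_1 = r_1 + r_2` and `(Zr)_i = r_{i-1} + r_{i+1}` for `2 ≤ i ≤ m+2`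
(1-based indices, with `r_j = 0` for `j > m+1`). Here indices are 0-based. -/
def Zmat2 (K : Type*) [Field K] (m : ℕ) : Matrix (Fin (m + 2)) (Fin (m + 1)) K :=
  Matrix.of fun r c =>
    if (r : ℕ) = 0 then (if (c : ℕ) = 0 ∨ (c : ℕ) = 1 then 1 else 0)
    else (if (c : ℕ) + 1 = (r : ℕ) ∨ (c : ℕ) = (r : ℕ) + 1 then 1 else 0)

/-- `ε_i = +1` if `i ≡ 2, 3 (mod 4)` and `ε_i = -1` if `i ≡ 0, 1 (mod 4)`. -/
def eps4 (K : Type*) [Field K] (i : ℕ) : K :=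
  if i % 4 = 2 ∨ i % 4 = 3 then 1 else -1

section aux
variable {K : Type*} [Field K]

lemma eps4_add_two (n : ℕ) : eps4 K (n + 2) = - eps4 K n := by
  unfold eps4
  by_cases h : n % 4 = 2 ∨ n % 4 = 3
  · rw [if_pos h, if_neg (by omega)]
  · rw [if_neg h, if_pos (by omega), neg_neg]

lemma eps4_ne_zero (n : ℕ) : eps4 K n ≠ 0 := by
  unfold eps4; split <;> simp

lemma sum_if_lt {n k : ℕ} (hk : k < n) (f : ℕ → K) :
    ∑ i : Fin n, (if (i : ℕ) = k then f (i : ℕ) else 0) = f k := by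
  have h : ∀ i : Fin n, (if (i : ℕ) = k then f (i : ℕ) else 0)
      = (if i = (⟨k, hk⟩ : Fin n) then f (i : ℕ) else 0) := by
    intro i; simp [Fin.ext_iff]
  simp_rw [h]
  rw [Finset.sum_ite_eq' Finset.univ (⟨k, hk⟩ : Fin n)]
  simp

lemma sum_if' {n k : ℕ} (f : ℕ → K) (hf : ∀ j, n ≤ j → f j = 0) :
    ∑ i : Fin n, (if (i : ℕ) = k then f (i : ℕ) else 0) = f k := by
  by_cases hk : k < n
  · exact sum_if_lt hk f
  · rw [hf k (by omega)]
    apply Finset.sum_eq_zero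
    intro i _
    rw [if_neg (by omega)]

end aux

theorem stmt1 (K : Type*) [Field K] (m : ℕ) :
    Function.Injective (Zmat2 K m).mulVecLin ∧
    (∀ s : Fin (m + 2) → K,
      s ∈ LinearMap.range (Zmat2 K m).mulVecLin ↔
        s 0 = ∑ i : Fin (m + 2), (if (i : ℕ) = 0 then 0 else eps4 K ((i : ℕ) + 1)) * s i) ∧
    Module.finrank K (LinearMap.range (Zmat2 K m).mulVecLin) = m + 1 := by
  set Z := Zmat2 K m with hZ
  set w : Fin (m + 2) → K := fun i => if (i : ℕ) = 0 then 0 else eps4 K ((i : ℕ) + 1) with hw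
  -- row computations
  have rowi : ∀ (x : Fin (m + 1) → K) (i : Fin (m + 2)), (i : ℕ) ≠ 0 →
      Z.mulVec x i = (fun j => if h : j < m + 1 then x ⟨j, h⟩ else 0) ((i : ℕ) - 1)
        + (fun j => if h : j < m + 1 then x ⟨j, h⟩ else 0) ((i : ℕ) + 1) := by
    intro x i hi
    set x' : ℕ → K := fun j => if h : j < m + 1 then x ⟨j, h⟩ else 0 with hx'
    have hx'v : ∀ c : Fin (m + 1), x c = x' (c : ℕ) := by
      intro c; simp only [hx', dif_pos c.isLt, Fin.eta]
    have hx'0 : ∀ j, m + 1 ≤ j → x' j = 0 := by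
      intro j hj; simp [hx', Nat.not_lt.mpr hj, show ¬ j ≤ m by omega]
    show ∑ c, Z i c * x c = x' ((i : ℕ) - 1) + x' ((i : ℕ) + 1)
    have hp : ∀ c : Fin (m + 1), Z i c * x c =
        (if (c : ℕ) = (i : ℕ) - 1 then x' (c : ℕ) else 0)
          + (if (c : ℕ) = (i : ℕ) + 1 then x' (c : ℕ) else 0) := by
      intro c
      rw [hx'v]
      simp only [hZ, Zmat2, Matrix.of_apply]
      split_ifs <;>
        first
          | (exfalso; omega)
          | (simp only [zero_mul, mul_zero, mul_one, one_mul, add_zero, zero_add]; done)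
    simp_rw [hp, Finset.sum_add_distrib]
    rw [sum_if' x' hx'0, sum_if' x' hx'0]
  -- injectivity
  have hinj : Function.Injective Z.mulVecLin := by
    rw [← LinearMap.ker_eq_bot, LinearMap.ker_eq_bot']
    intro x hx
    have hx0 : Z.mulVec x = 0 := by rw [← Matrix.mulVecLin_apply, hx]
    set x' : ℕ → K := fun j => if h : j < m + 1 then x ⟨j, h⟩ else 0 with hx'
    have hx'0 : ∀ j, m + 1 ≤ j → x' j = 0 := by
      intro j hj; simp [hx', Nat.not_lt.mpr hj, show ¬ j ≤ m by omega]
    have hrec : ∀ t, t ≤ m → x' t = - x' (t + 2) := by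
      intro t ht
      have hi : (t : ℕ) + 1 < m + 2 := by omega
      have h1 := rowi x ⟨t + 1, hi⟩ (by simp)
      have hz : Z.mulVec x ⟨t + 1, hi⟩ = 0 := by rw [hx0]; rfl
      rw [hz] at h1
      simp only [Fin.val_mk] at h1
      have h2 : (0 : K) = x' (t + 1 - 1) + x' (t + 1 + 1) := h1
      have h3 : (0 : K) = x' t + x' (t + 2) := by
        rw [show t + 1 - 1 = t by omega, show t + 1 + 1 = t + 2 by rfl] at h2
        exact h2
      linear_combination -h3
    have key : ∀ k t, m + 1 ≤ t + k → x' t = 0 := by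
      intro k
      induction k with
      | zero => intro t ht; exact hx'0 t (by omega)
      | succ k ih =>
        intro t ht
        by_cases h : t ≤ m
        · rw [hrec t h, ih (t + 2) (by omega), neg_zero]
        · exact hx'0 t (by omega)
    funext c
    have hc := key (m + 1) (c : ℕ) (by omega)
    simp only [hx'] at hc
    rw [dif_pos c.isLt] at hc
    simpa using hc
  -- column sums
  have colsum : ∀ c : Fin (m + 1), ∑ i : Fin (m + 2), w i * Z i c = Z 0 c := by
    intro c
    have hpt : ∀ i : Fin (m + 2), w i * Z i c =
        (if (i : ℕ) = (c : ℕ) + 1 then eps4 K ((c : ℕ) + 2) else 0)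
          + (if 2 ≤ (c : ℕ) ∧ (i : ℕ) = (c : ℕ) - 1 then eps4 K (c : ℕ) else 0) := by
      intro i
      simp only [hw, hZ, Zmat2, Matrix.of_apply]
      split_ifs <;>
        first
          | (exfalso; omega)
          | (simp only [zero_mul, mul_zero, mul_one, one_mul, add_zero, zero_add]; done)
          | (simp only [mul_one, mul_zero, zero_mul, one_mul, add_zero, zero_add];
             congr 1; omega)
    simp_rw [hpt, Finset.sum_add_distrib]
    have h1 : ∑ i : Fin (m + 2), (if (i : ℕ) = (c : ℕ) + 1 then eps4 K ((c : ℕ) + 2) else 0)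
        = eps4 K ((c : ℕ) + 2) := by
      have := sum_if_lt (n := m + 2) (k := (c : ℕ) + 1) (by omega)
        (fun _ => eps4 K ((c : ℕ) + 2))
      simpa using this
    rw [h1]
    by_cases hc2 : 2 ≤ (c : ℕ)
    · have h2 : ∑ i : Fin (m + 2), (if 2 ≤ (c : ℕ) ∧ (i : ℕ) = (c : ℕ) - 1 then eps4 K (c : ℕ) else 0)
          = eps4 K (c : ℕ) := by
        have := sum_if_lt (n := m + 2) (k := (c : ℕ) - 1) (by omega) (fun _ => eps4 K (c : ℕ))
        simp_rw [hc2, true_and]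
        simpa using this
      rw [h2]
      have hz0 : Z 0 c = 0 := by
        simp only [hZ, Zmat2, Matrix.of_apply, Fin.val_zero, if_true]
        rw [if_neg (by omega)]
      rw [hz0, eps4_add_two (K := K) (c : ℕ)]
      ring
    · have h2 : ∑ i : Fin (m + 2), (if 2 ≤ (c : ℕ) ∧ (i : ℕ) = (c : ℕ) - 1 then eps4 K (c : ℕ) else 0)
          = 0 := by
        apply Finset.sum_eq_zero; intro i _; rw [if_neg (by omega)]
      rw [h2, add_zero]
      have hz1 : Z 0 c = 1 := by
        simp only [hZ, Zmat2, Matrix.of_apply, Fin.val_zero, if_true]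
        rw [if_pos (by omega)]
      rw [hz1]
      interval_cases h : (c : ℕ)
      · simp [eps4]
      · simp [eps4]
  -- the functional
  set φ : (Fin (m + 2) → K) →ₗ[K] K :=
    (∑ i : Fin (m + 2), w i • (LinearMap.proj i : (Fin (m + 2) → K) →ₗ[K] K))
      - LinearMap.proj 0 with hφ
  have hφapp : ∀ s : Fin (m + 2) → K, φ s = (∑ i : Fin (m + 2), w i * s i) - s 0 := by
    intro s
    simp [hφ, LinearMap.sum_apply]
  have hker : ∀ s, (s ∈ LinearMap.ker φ ↔
      s 0 = ∑ i : Fin (m + 2), w i * s i) := by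
    intro s
    rw [LinearMap.mem_ker, hφapp, sub_eq_zero, eq_comm]
  -- range ≤ ker φ
  have hle : LinearMap.range Z.mulVecLin ≤ LinearMap.ker φ := by
    rintro _ ⟨x, rfl⟩
    rw [LinearMap.mem_ker, hφapp]
    simp only [Matrix.mulVecLin_apply]
    have hmain : ∑ i : Fin (m + 2), w i * Z.mulVec x i = Z.mulVec x 0 := by
      have expand : ∀ i : Fin (m + 2), w i * Z.mulVec x i = ∑ c, w i * Z i c * x c := by
        intro i
        show w i * ∑ c, Z i c * x c = _
        rw [Finset.mul_sum]
        exact Finset.sum_congr rfl fun c _ => by ring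
      simp_rw [expand]
      rw [Finset.sum_comm]
      have hc : ∀ c : Fin (m + 1), ∑ i : Fin (m + 2), w i * Z i c * x c = Z 0 c * x c := by
        intro c
        rw [← Finset.sum_mul, colsum c]
      simp_rw [hc]
      rfl
    rw [hmain]
    exact sub_self _
  -- φ is nonzero on the indicator of the last coordinate
  set v : Fin (m + 2) → K := fun j => if (j : ℕ) = m + 1 then 1 else 0 with hv
  have hφv : φ v = eps4 K (m + 2) := by
    rw [hφapp]
    have hv0 : v 0 = 0 := by
      simp only [hv, Fin.val_zero]
      split_ifs <;> simp_all
    rw [hv0, sub_zero]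
    have hp : ∀ i : Fin (m + 2), w i * v i =
        (if (i : ℕ) = m + 1 then
          (fun j : ℕ => if j = 0 then 0 else eps4 K (j + 1)) (i : ℕ) else 0) := by
      intro i
      simp only [hw, hv]
      by_cases h : (i : ℕ) = m + 1
      · rw [if_pos h, if_pos h, mul_one]
      · rw [if_neg h, if_neg h, mul_zero]
    simp_rw [hp]
    rw [sum_if_lt (by omega) (fun j : ℕ => if j = 0 then 0 else eps4 K (j + 1))]
    simp only [if_neg (by omega : ¬ m + 1 = 0)]
  have hφsurj : Function.Surjective φ := by
    intro a
    refine ⟨(a * (eps4 K (m + 2))⁻¹) • v, ?_⟩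
    rw [map_smul, hφv, smul_eq_mul]
    have := eps4_ne_zero (K := K) (m + 2)
    field_simp
  -- finrank of ker φ
  have hkerrank : Module.finrank K (LinearMap.ker φ) = m + 1 := by
    have h1 := LinearMap.finrank_range_add_finrank_ker φ
    have h2 : LinearMap.range φ = ⊤ := LinearMap.range_eq_top.mpr hφsurj
    rw [h2] at h1
    have h3 : Module.finrank K (⊤ : Submodule K K) = 1 := by
      rw [finrank_top]; exact Module.finrank_self K
    rw [h3] at h1
    have h4 : Module.finrank K (Fin (m + 2) → K) = m + 2 := Module.finrank_fin_fun K
    omega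
  have hrangerank : Module.finrank K (LinearMap.range Z.mulVecLin) = m + 1 := by
    rw [LinearMap.finrank_range_of_inj hinj]
    exact Module.finrank_fin_fun K
  have heq : LinearMap.range Z.mulVecLin = LinearMap.ker φ :=
    Submodule.eq_of_le_of_finrank_eq hle (by rw [hrangerank, hkerrank])
  refine ⟨hinj, ?_, hrangerank⟩
  intro s
  rw [heq]
  exact hker s
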